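/- Let K be a finite field with |K| = q, let W be a finite-dimensional K-vector space, and let (U,V) be a nontrivial solution of the isometry equation with tuples of length m = q+1 such that max_i dim_K V_i = max_i dim_K U_i = n > 1. Then for every j ∈ {1,…,m} with dim_K U_j = n, there exists a subspace S ⊂ U_j with dim_K S = n−2 such that S ⊆ V_i for all i ∈ {1,…,m}. -/

import Mathlib

open Finset
open scoped Classical

/-- The pair of tuples `(U, V)` is a solution of the isometry equation
`∑ i, (1/|V i|) • 1_{V i} = ∑ i, (1/|U i|) • 1_{U i}` as real-valued functions on `W`. -/
def IsometrySolution {K W : Type*} [Field K] [AddCommGroup W] [Module K W]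
    {m : ℕ} (U V : Fin m → Submodule K W) : Prop :=
  ∀ w : W,
    ∑ i, ((Nat.card ↥(V i) : ℝ))⁻¹ * (if w ∈ V i then 1 else 0) =
    ∑ i, ((Nat.card ↥(U i) : ℝ))⁻¹ * (if w ∈ U i then 1 else 0)

/-- Two tuples of subspaces are equivalent if one is a permutation of the other. -/
def TuplesEquiv {K W : Type*} [Field K] [AddCommGroup W] [Module K W]
    {m : ℕ} (U V : Fin m → Submodule K W) : Prop :=
  ∃ π : Equiv.Perm (Fin m), ∀ i, V i = U (π i)

set_option linter.unusedSectionVars false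
set_option maxHeartbeats 1000000

lemma perm_of_map_univ_eq {α : Type*} {m : ℕ} (f g : Fin m → α)
    (h : Multiset.map f Finset.univ.val = Multiset.map g Finset.univ.val) :
    ∃ σ : Equiv.Perm (Fin m), ∀ i, f i = g (σ i) := by
  have hfib : ∀ a : α, Fintype.card {i // f i = a} = Fintype.card {i // g i = a} := by
    intro a
    have hc : Multiset.count a (Multiset.map f Finset.univ.val)
        = Multiset.count a (Multiset.map g Finset.univ.val) := by rw [h]
    rw [Multiset.count_map, Multiset.count_map] at hc
    rw [Fintype.card_subtype, Fintype.card_subtype]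
    simpa [Finset.filter, eq_comm] using hc
  let e : ∀ a, {i // f i = a} ≃ {i // g i = a} := fun a => Fintype.equivOfCardEq (hfib a)
  refine ⟨(Equiv.sigmaFiberEquiv f).symm.trans
    ((Equiv.sigmaCongrRight e).trans (Equiv.sigmaFiberEquiv g)), fun i => ?_⟩
  exact ((e (f i)) ⟨i, rfl⟩).2.symm

section Helpers

variable {K W : Type*} [Field K] [Fintype K] [AddCommGroup W] [Module K W]
  [FiniteDimensional K W]

noncomputable def termF (w : W) (p : Submodule K W) : ℝ :=
  ((Nat.card ↥p : ℝ))⁻¹ * (if w ∈ p then 1 else 0)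

noncomputable def msF (A : Multiset (Submodule K W)) (w : W) : ℝ :=
  (A.map (termF w)).sum

lemma termF_nonneg (w : W) (p : Submodule K W) : 0 ≤ termF w p := by
  unfold termF; positivity

lemma termF_pos (w : W) (p : Submodule K W) (hw : w ∈ p) : 0 < termF w p := by
  have : Finite W := Module.finite_of_finite K
  have : Finite ↥p := Subtype.finite
  have h0 : 0 < Nat.card ↥p := Nat.card_pos
  unfold termF
  rw [if_pos hw, mul_one]
  positivity

lemma termF_eq_zero (w : W) (p : Submodule K W) (hw : w ∉ p) : termF w p = 0 := by
  unfold termF; rw [if_neg hw, mul_zero]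

lemma msF_cons (p : Submodule K W) (A : Multiset (Submodule K W)) (w : W) :
    msF (p ::ₘ A) w = termF w p + msF A w := by
  simp [msF]

lemma msF_nonneg (A : Multiset (Submodule K W)) (w : W) : 0 ≤ msF A w := by
  refine Multiset.sum_nonneg ?_
  intro x hx
  obtain ⟨p, _, rfl⟩ := Multiset.mem_map.mp hx
  exact termF_nonneg w p

lemma msF_pos (A : Multiset (Submodule K W)) {p : Submodule K W} (hp : p ∈ A)
    {w : W} (hw : w ∈ p) : 0 < msF A w := by
  obtain ⟨A', rfl⟩ : ∃ A', p ::ₘ A' = A := ⟨A.erase p, Multiset.cons_erase hp⟩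
  rw [msF_cons]
  have := msF_nonneg A' w
  have := termF_pos w p hw
  linarith

lemma msF_exists_mem (A : Multiset (Submodule K W)) {w : W} (h : 0 < msF A w) :
    ∃ p ∈ A, w ∈ p := by
  by_contra hc
  push_neg at hc
  have : msF A w = 0 := by
    refine Multiset.sum_eq_zero ?_
    intro x hx
    obtain ⟨p, hp, rfl⟩ := Multiset.mem_map.mp hx
    exact termF_eq_zero w p (hc p hp)
  linarith

noncomputable def pF [Fintype W] (p : Submodule K W) : Finset W :=
  Finset.univ.filter (fun x => x ∈ p)

lemma mem_pF [Fintype W] (p : Submodule K W) (x : W) : x ∈ pF p ↔ x ∈ p := by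
  simp [pF]

lemma card_pF [Fintype W] (p : Submodule K W) :
    (pF p).card = Fintype.card K ^ Module.finrank K ↥p := by
  have : (pF p).card = Fintype.card {x // x ∈ p} := (Fintype.card_subtype _).symm
  rw [this]
  exact Module.card_eq_pow_finrank

lemma pF_mono [Fintype W] {p q : Submodule K W} (h : p ≤ q) : pF p ⊆ pF q := by
  intro x hx
  rw [mem_pF] at *
  exact h hx

lemma two_le_q (K : Type*) [Field K] [Fintype K] : 2 ≤ Fintype.card K := Fintype.one_lt_card

lemma exists_intermediate (X : Submodule K W) (k : ℕ) :
    ∀ p : Submodule K W, p ≤ X → Module.finrank K ↥p ≤ k → k ≤ Module.finrank K ↥X →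
    ∃ G : Submodule K W, p ≤ G ∧ G ≤ X ∧ Module.finrank K ↥G = k := by
  induction k with
  | zero =>
    intro p hpX h1 h2
    have hp0 : p = ⊥ := Submodule.finrank_eq_zero.mp (Nat.le_zero.mp h1)
    exact ⟨⊥, hp0.le, bot_le, finrank_bot K W⟩
  | succ k ih =>
    intro p hpX h1 h2
    rcases Nat.lt_or_ge (Module.finrank K ↥p) (k+1) with hlt | hge
    · -- finrank p ≤ k
      obtain ⟨G, hpG, hGX, hG⟩ := ih p hpX (Nat.lt_succ_iff.mp hlt) (Nat.le_of_succ_le h2)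
      -- extend G by one
      have hGX' : ¬ X ≤ G := by
        intro hXG
        have := Submodule.finrank_mono (R := K) hXG
        omega
      obtain ⟨x, hxX, hxG⟩ := SetLike.not_le_iff_exists.mp hGX'
      refine ⟨G ⊔ Submodule.span K {x}, le_trans hpG le_sup_left,
        sup_le hGX ((Submodule.span_singleton_le_iff_mem x X).mpr hxX), ?_⟩
      have hx0 : x ≠ 0 := fun h0 => hxG (h0 ▸ Submodule.zero_mem G)
      have hinf : G ⊓ Submodule.span K {x} = ⊥ := by
        rw [eq_bot_iff]
        rintro y ⟨hyG, hy⟩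
        obtain ⟨c, rfl⟩ := Submodule.mem_span_singleton.mp hy
        rcases eq_or_ne c 0 with rfl | hc
        · simp
        · have : c⁻¹ • c • x ∈ G := Submodule.smul_mem G c⁻¹ hyG
          rw [smul_smul, inv_mul_cancel₀ hc, one_smul] at this
          exact absurd this hxG
      have := Submodule.finrank_sup_add_finrank_inf_eq G (Submodule.span K {x})
      rw [hinf, finrank_bot, finrank_span_singleton hx0] at this
      omega
    · -- finrank p = k+1, take G = p... need finrank p ≤ k+1 so equal
      have : Module.finrank K ↥p = k + 1 := le_antisymm h1 hge
      exact ⟨p, le_rfl, hpX, this⟩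


lemma no_cover_small {ι : Type*} (s : Finset ι) (X : Submodule K W) (hX : X ≠ ⊥)
    (H : ι → Submodule K W) (hcard : s.card ≤ Fintype.card K)
    (hprop : ∀ i ∈ s, ¬ X ≤ H i) (hcov : ∀ x ∈ X, ∃ i ∈ s, x ∈ H i) : False := by
  have : Finite W := Module.finite_of_finite K
  have : Fintype W := Fintype.ofFinite W
  have hq2 : 2 ≤ Fintype.card K := two_le_q K
  set n := Module.finrank K ↥X with hn
  have hn1 : 1 ≤ n := by
    rcases Nat.eq_zero_or_pos n with h0 | h
    · exact absurd (Submodule.finrank_eq_zero.mp (hn ▸ h0)) hX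
    · exact h
  have key : (pF X).erase 0 ⊆ s.biUnion (fun i => (pF (X ⊓ H i)).erase 0) := by
    intro x hx
    rw [Finset.mem_erase, mem_pF] at hx
    obtain ⟨i, his, hxi⟩ := hcov x hx.2
    refine Finset.mem_biUnion.mpr ⟨i, his, ?_⟩
    rw [Finset.mem_erase, mem_pF]
    exact ⟨hx.1, hx.2, hxi⟩
  have hcard1 : ((pF X).erase 0).card = Fintype.card K ^ n - 1 := by
    rw [Finset.card_erase_of_mem (by rw [mem_pF]; exact X.zero_mem), card_pF]
  have hterm : ∀ i ∈ s, ((pF (X ⊓ H i)).erase 0).card ≤ Fintype.card K ^ (n-1) - 1 := by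
    intro i his
    have hlt : X ⊓ H i < X := lt_of_le_of_ne inf_le_left
      (fun h => hprop i his (h ▸ inf_le_right))
    have hr : Module.finrank K ↥(X ⊓ H i) < n := Submodule.finrank_lt_finrank_of_lt hlt
    rw [Finset.card_erase_of_mem (by rw [mem_pF]; exact Submodule.zero_mem _), card_pF]
    have hle : Fintype.card K ^ Module.finrank K ↥(X ⊓ H i) ≤ Fintype.card K ^ (n-1) :=
      Nat.pow_le_pow_right (by omega) (by omega)
    omega
  have hbig : ((pF X).erase 0).card ≤ s.card * (Fintype.card K ^ (n-1) - 1) :=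
    le_trans (Finset.card_le_card key)
      (le_trans (Finset.card_biUnion_le) (Finset.sum_le_card_nsmul s _ _ hterm))
  have hqn : Fintype.card K ^ n = Fintype.card K * Fintype.card K ^ (n - 1) := by
    conv_lhs => rw [show n = 1 + (n - 1) by omega]
    rw [pow_add, pow_one]
  have hpow : 1 ≤ Fintype.card K ^ (n - 1) := Nat.one_le_pow _ _ (by omega)
  rw [hcard1, hqn] at hbig
  have h1 : s.card * (Fintype.card K ^ (n-1) - 1)
      ≤ Fintype.card K * (Fintype.card K ^ (n-1) - 1) := Nat.mul_le_mul_right _ hcard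
  have e : Fintype.card K * (Fintype.card K ^ (n-1) - 1) + Fintype.card K
      = Fintype.card K * Fintype.card K ^ (n-1) := by
    rw [← Nat.mul_succ]
    congr 1
    omega
  have hx : Fintype.card K ≤ Fintype.card K * Fintype.card K ^ (n-1) :=
    Nat.le_mul_of_pos_right _ (by omega)
  omega

lemma hyperplane_inf_rank {n : ℕ} (hn : 1 < n) (X G₁ G₂ : Submodule K W)
    (h1X : G₁ ≤ X) (h2X : G₂ ≤ X) (hX : Module.finrank K ↥X = n)
    (h1 : Module.finrank K ↥G₁ = n - 1) (h2 : Module.finrank K ↥G₂ = n - 1)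
    (hne : G₁ ≠ G₂) : Module.finrank K ↥(G₁ ⊓ G₂) = n - 2 := by
  have hsum := Submodule.finrank_sup_add_finrank_inf_eq G₁ G₂
  have hsuple : Module.finrank K ↥(G₁ ⊔ G₂) ≤ n := hX ▸ Submodule.finrank_mono (sup_le h1X h2X)
  have hsupge : Module.finrank K ↥(G₁ ⊔ G₂) = n := by
    rcases Nat.lt_or_ge (Module.finrank K ↥(G₁ ⊔ G₂)) n with hlt | hge
    · exfalso
      have e1 : G₁ = G₁ ⊔ G₂ := Submodule.eq_of_le_of_finrank_le le_sup_left (by omega)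
      have e2 : G₂ = G₁ ⊔ G₂ := Submodule.eq_of_le_of_finrank_le le_sup_right (by omega)
      exact hne (e1.trans e2.symm)
    · omega
  omega

/-- Structure of covers of an `n`-dimensional space by `q+1` proper subspaces. -/
lemma cover_structure (X : Submodule K W) (n : ℕ) (hn : 1 < n)
    (hX : Module.finrank K ↥X = n)
    (H : Fin (Fintype.card K + 1) → Submodule K W)
    (hle : ∀ i, H i ≤ X) (hne : ∀ i, H i ≠ X)
    (hcov : ∀ x ∈ X, ∃ i, x ∈ H i) :
    ∃ S : Submodule K W, Module.finrank K ↥S = n - 2 ∧ ∀ i, S ≤ H i := by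
  have : Finite W := Module.finite_of_finite K
  have : Fintype W := Fintype.ofFinite W
  have hq2 : 2 ≤ Fintype.card K := two_le_q K
  have hGex : ∀ i, ∃ G : Submodule K W, H i ≤ G ∧ G ≤ X ∧ Module.finrank K ↥G = n - 1 := by
    intro i
    have hlt : H i < X := lt_of_le_of_ne (hle i) (hne i)
    have hr : Module.finrank K ↥(H i) < n := hX ▸ Submodule.finrank_lt_finrank_of_lt hlt
    exact exists_intermediate X (n-1) (H i) (hle i) (by omega) (by omega)
  choose G hHG hGX hGrank using hGex
  have hA1 : 1 ≤ Fintype.card K ^ (n-2) := Nat.one_le_pow _ _ (by omega)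
  have hBA : Fintype.card K * Fintype.card K ^ (n-2) = Fintype.card K ^ (n-1) := by
    rw [← pow_succ']
    congr 1
    omega
  have hqB : Fintype.card K * Fintype.card K ^ (n-1) = Fintype.card K ^ n := by
    rw [← pow_succ']
    congr 1
    omega
  have hABlt : Fintype.card K ^ (n-2) < Fintype.card K ^ (n-1) :=
    Nat.pow_lt_pow_right (by omega) (by omega)
  have key : ∀ c : Fin (Fintype.card K + 1),
      (∀ i, i ≠ c → G i ≠ G c) ∧
      (∀ a b, a ≠ b → a ≠ c → b ≠ c → G a ⊓ G b ≤ G c) := by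
    intro c
    set s : Finset (Fin (Fintype.card K + 1)) := Finset.univ.erase c with hs
    have hscard : s.card = Fintype.card K := by
      rw [hs, Finset.card_erase_of_mem (Finset.mem_univ c), Finset.card_univ, Fintype.card_fin]
      omega
    set T : Finset W := pF X \ pF (G c) with hT
    have hTcard : T.card + Fintype.card K ^ (n-1) = Fintype.card K ^ n := by
      have h1 := Finset.card_sdiff_add_card_inter (pF X) (pF (G c))
      rw [Finset.inter_eq_right.mpr (pF_mono (hGX c)), card_pF, card_pF, hX, hGrank c] at h1
      rw [← hT] at h1
      exact h1
    have hfe : ∀ i, T.filter (fun x => x ∈ G i) = pF (G i) \ pF (G c) := by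
      intro i
      ext x
      simp only [hT, Finset.mem_filter, Finset.mem_sdiff, mem_pF]
      constructor
      · rintro ⟨⟨hX', hc⟩, hi⟩; exact ⟨hi, hc⟩
      · rintro ⟨hi, hc⟩; exact ⟨⟨hGX i hi, hc⟩, hi⟩
    have hterm_eq : ∀ i, G i ≠ G c →
        (T.filter (fun x => x ∈ G i)).card + Fintype.card K ^ (n-2)
          = Fintype.card K ^ (n-1) := by
      intro i hne'
      rw [hfe i]
      have h1 := Finset.card_sdiff_add_card_inter (pF (G i)) (pF (G c))
      have h2 : pF (G i) ∩ pF (G c) = pF (G i ⊓ G c) := by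
        ext x
        simp only [Finset.mem_inter, mem_pF, Submodule.mem_inf]
      have h3 : Module.finrank K ↥(G i ⊓ G c) = n - 2 :=
        hyperplane_inf_rank hn X (G i) (G c) (hGX i) (hGX c) hX (hGrank i) (hGrank c) hne'
      rw [h2, card_pF, card_pF, h3, hGrank i] at h1
      exact h1
    have hterm_eq0 : ∀ i, G i = G c → (T.filter (fun x => x ∈ G i)).card = 0 := by
      intro i heq
      rw [Finset.card_eq_zero, Finset.filter_eq_empty_iff]
      intro x hx
      rw [hT, Finset.mem_sdiff, mem_pF, mem_pF] at hx
      rw [heq]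
      exact hx.2
    have hterm_le : ∀ i,
        (T.filter (fun x => x ∈ G i)).card + Fintype.card K ^ (n-2)
          ≤ Fintype.card K ^ (n-1) := by
      intro i
      by_cases hGi : G i = G c
      · rw [hterm_eq0 i hGi]
        have : Fintype.card K ^ (n-2) ≤ Fintype.card K * Fintype.card K ^ (n-2) :=
          Nat.le_mul_of_pos_left _ (by omega)
        omega
      · exact (hterm_eq i hGi).le
    have hinner : ∀ x ∈ T, 1 ≤ (s.filter (fun i => x ∈ G i)).card := by
      intro x hx
      rw [hT, Finset.mem_sdiff, mem_pF, mem_pF] at hx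
      obtain ⟨i, hxi⟩ := hcov x hx.1
      have hic : i ≠ c := fun h => hx.2 (hHG c (h ▸ hxi))
      exact Finset.card_pos.mpr ⟨i, Finset.mem_filter.mpr
        ⟨Finset.mem_erase.mpr ⟨hic, Finset.mem_univ i⟩, hHG i hxi⟩⟩
    have hswap : ∑ i ∈ s, (T.filter (fun x => x ∈ G i)).card
        = ∑ x ∈ T, (s.filter (fun i => x ∈ G i)).card := by
      simp only [Finset.card_filter]
      exact Finset.sum_comm
    have hsum_ge : T.card ≤ ∑ i ∈ s, (T.filter (fun x => x ∈ G i)).card := by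
      rw [hswap]
      calc T.card = ∑ _x ∈ T, 1 := by simp
      _ ≤ ∑ x ∈ T, (s.filter (fun i => x ∈ G i)).card := Finset.sum_le_sum hinner
    have e1 : (Fintype.card K - 1) * Fintype.card K ^ (n-1) + Fintype.card K ^ (n-1)
        = Fintype.card K * Fintype.card K ^ (n-1) := by
      have h : (Fintype.card K - 1) + 1 = Fintype.card K := by omega
      calc (Fintype.card K - 1) * Fintype.card K ^ (n-1) + Fintype.card K ^ (n-1)
          = ((Fintype.card K - 1) + 1) * Fintype.card K ^ (n-1) := by ring
        _ = Fintype.card K * Fintype.card K ^ (n-1) := by rw [h]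
    constructor
    · -- claim 1
      intro i0 hic heq
      have hi0s : i0 ∈ s := Finset.mem_erase.mpr ⟨hic, Finset.mem_univ i0⟩
      have hsplit : ∑ i ∈ s.erase i0, (T.filter (fun x => x ∈ G i)).card
          + (T.filter (fun x => x ∈ G i0)).card
          = ∑ i ∈ s, (T.filter (fun x => x ∈ G i)).card :=
        Finset.sum_erase_add s _ hi0s
      have hz : (T.filter (fun x => x ∈ G i0)).card = 0 := hterm_eq0 i0 heq
      have hrest : ∑ i ∈ s.erase i0, (T.filter (fun x => x ∈ G i)).card
          ≤ (Fintype.card K - 1) * (Fintype.card K ^ (n-1) - Fintype.card K ^ (n-2)) := by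
        have hc : (s.erase i0).card = Fintype.card K - 1 := by
          rw [Finset.card_erase_of_mem hi0s, hscard]
        calc ∑ i ∈ s.erase i0, (T.filter (fun x => x ∈ G i)).card
            ≤ (s.erase i0).card • (Fintype.card K ^ (n-1) - Fintype.card K ^ (n-2)) :=
              Finset.sum_le_card_nsmul _ _ _ (fun i _ => by have := hterm_le i; omega)
          _ = (Fintype.card K - 1) * (Fintype.card K ^ (n-1) - Fintype.card K ^ (n-2)) := by
              rw [hc, smul_eq_mul]
      -- arithmetic contradiction
      have hAB : Fintype.card K ^ (n-2) ≤ Fintype.card K ^ (n-1) := by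
        rw [← hBA]
        exact Nat.le_mul_of_pos_left _ (by omega)
      have hsum_le : T.card ≤ (Fintype.card K - 1) *
          (Fintype.card K ^ (n-1) - Fintype.card K ^ (n-2)) := by
        omega
      have e2 : (Fintype.card K - 1) * (Fintype.card K ^ (n-1) - Fintype.card K ^ (n-2))
          + (Fintype.card K ^ (n-1) - Fintype.card K ^ (n-2))
          = Fintype.card K * (Fintype.card K ^ (n-1) - Fintype.card K ^ (n-2)) := by
        have h : (Fintype.card K - 1) + 1 = Fintype.card K := by omega
        calc (Fintype.card K - 1) * (Fintype.card K ^ (n-1) - Fintype.card K ^ (n-2))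
              + (Fintype.card K ^ (n-1) - Fintype.card K ^ (n-2))
            = ((Fintype.card K - 1) + 1) * (Fintype.card K ^ (n-1) - Fintype.card K ^ (n-2)) := by
              ring
          _ = _ := by rw [h]
      have e3 : Fintype.card K * (Fintype.card K ^ (n-1) - Fintype.card K ^ (n-2))
          + Fintype.card K * Fintype.card K ^ (n-2)
          = Fintype.card K * Fintype.card K ^ (n-1) := by
        rw [← Nat.mul_add]
        congr 1
        omega
      omega
    · -- claim 2
      intro a b hab hac hbc x hx
      by_contra hxc
      rw [Submodule.mem_inf] at hx
      have hxX : x ∈ X := hGX a hx.1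
      have hxT : x ∈ T := by
        rw [hT, Finset.mem_sdiff, mem_pF, mem_pF]
        exact ⟨hxX, hxc⟩
      have h2c : 1 < (s.filter (fun i => x ∈ G i)).card := by
        refine Finset.one_lt_card.mpr ⟨a, ?_, b, ?_, hab⟩
        · exact Finset.mem_filter.mpr ⟨Finset.mem_erase.mpr ⟨hac, Finset.mem_univ a⟩, hx.1⟩
        · exact Finset.mem_filter.mpr ⟨Finset.mem_erase.mpr ⟨hbc, Finset.mem_univ b⟩, hx.2⟩
      have hstrict : T.card < ∑ x ∈ T, (s.filter (fun i => x ∈ G i)).card := by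
        have := Finset.sum_lt_sum (f := fun _ : W => 1)
          (g := fun x => (s.filter (fun i => x ∈ G i)).card)
          (fun y hy => hinner y hy) ⟨x, hxT, h2c⟩
        simpa using this
      have hsum_le2 : ∑ i ∈ s, (T.filter (fun x => x ∈ G i)).card
          ≤ Fintype.card K * (Fintype.card K ^ (n-1) - Fintype.card K ^ (n-2)) := by
        calc ∑ i ∈ s, (T.filter (fun x => x ∈ G i)).card
            ≤ s.card • (Fintype.card K ^ (n-1) - Fintype.card K ^ (n-2)) :=
              Finset.sum_le_card_nsmul _ _ _ (fun i _ => by have := hterm_le i; omega)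
          _ = _ := by rw [hscard, smul_eq_mul]
      rw [← hswap] at hstrict
      have hAB : Fintype.card K ^ (n-2) ≤ Fintype.card K ^ (n-1) := by
        rw [← hBA]
        exact Nat.le_mul_of_pos_left _ (by omega)
      have e3 : Fintype.card K * (Fintype.card K ^ (n-1) - Fintype.card K ^ (n-2))
          + Fintype.card K * Fintype.card K ^ (n-2)
          = Fintype.card K * Fintype.card K ^ (n-1) := by
        rw [← Nat.mul_add]
        congr 1
        omega
      omega
  -- now build S
  have h01 : (⟨0, by omega⟩ : Fin (Fintype.card K + 1)) ≠ ⟨1, by omega⟩ := by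
    simp [Fin.ext_iff]
  set i0 : Fin (Fintype.card K + 1) := ⟨0, by omega⟩ with hi0
  set i1 : Fin (Fintype.card K + 1) := ⟨1, by omega⟩ with hi1
  have hG01 : G i0 ≠ G i1 := (key i1).1 i0 h01
  set S := G i0 ⊓ G i1 with hS
  have hSrank : Module.finrank K ↥S = n - 2 :=
    hyperplane_inf_rank hn X (G i0) (G i1) (hGX i0) (hGX i1) hX (hGrank i0) (hGrank i1) hG01
  have hSG : ∀ i, S ≤ G i := by
    intro i
    rcases eq_or_ne i i0 with rfl | h0
    · exact inf_le_left
    rcases eq_or_ne i i1 with rfl | h1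
    · exact inf_le_right
    · exact (key i).2 i0 i1 h01 h0.symm h1.symm
  refine ⟨S, hSrank, ?_⟩
  intro i
  have hnle : ¬ G i ≤ S := by
    intro h
    have := Submodule.finrank_mono (R := K) h
    rw [hSrank, hGrank i] at this
    omega
  obtain ⟨y, hyGi, hyS⟩ := SetLike.not_le_iff_exists.mp hnle
  have hGiS_sub : ∀ z, z ∈ G i → z ∉ S → z ∈ H i := by
    intro z hzGi hzS
    obtain ⟨i', hzHi'⟩ := hcov z (hGX i hzGi)
    rcases eq_or_ne i' i with rfl | hii
    · exact hzHi'
    exfalso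
    have hzGi' : z ∈ G i' := hHG i' hzHi'
    have hzin : z ∈ G i ⊓ G i' := Submodule.mem_inf.mpr ⟨hzGi, hzGi'⟩
    have hne' : G i ≠ G i' := fun h => (key i).1 i' hii h.symm
    have hinfrank : Module.finrank K ↥(G i ⊓ G i') = n - 2 :=
      hyperplane_inf_rank hn X (G i) (G i') (hGX i) (hGX i') hX (hGrank i) (hGrank i') hne'
    have hSle : S ≤ G i ⊓ G i' := le_inf (hSG i) (hSG i')
    have hSeq : S = G i ⊓ G i' :=
      Submodule.eq_of_le_of_finrank_le hSle (by rw [hSrank, hinfrank])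
    exact hzS (hSeq ▸ hzin)
  intro w hwS
  have hwGi : w ∈ G i := hSG i hwS
  have hwy : w + y ∈ G i := add_mem hwGi hyGi
  have hwyS : w + y ∉ S := by
    intro h
    have := S.sub_mem h hwS
    simp only [add_sub_cancel_left] at this
    exact hyS this
  have h1 : w + y ∈ H i := hGiS_sub _ hwy hwyS
  have h2 : y ∈ H i := hGiS_sub _ hyGi hyS
  have := (H i).sub_mem h1 h2
  simpa using this

lemma max_mem_other (A B : Multiset (Submodule K W))
    (hBcard : Multiset.card B ≤ Fintype.card K)
    (heq : ∀ w, msF A w = msF B w) (M : Submodule K W) (hMA : M ∈ A)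
    (hmax : ∀ p ∈ B, Module.finrank K ↥p ≤ Module.finrank K ↥M) : M ∈ B := by
  by_contra hMB
  have hBne : B ≠ 0 := by
    intro h0
    have h1 : msF A 0 > 0 := msF_pos A hMA M.zero_mem
    rw [heq 0, h0] at h1
    simp [msF] at h1
  rcases eq_or_ne M ⊥ with rfl | hMbot
  · -- all elements of B are ⊥
    obtain ⟨p, hp⟩ := Multiset.exists_mem_of_ne_zero hBne
    have : Module.finrank K ↥p = 0 := Nat.le_zero.mp (by simpa [finrank_bot] using hmax p hp)
    have : p = ⊥ := Submodule.finrank_eq_zero.mp this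
    exact hMB (this ▸ hp)
  · -- covering argument
    obtain ⟨l, hl⟩ : ∃ l : List (Submodule K W), (l : Multiset (Submodule K W)) = B :=
      Quotient.exists_rep B
    have hcov : ∀ x ∈ M, ∃ i ∈ (Finset.univ : Finset (Fin l.length)), x ∈ l.get i := by
      intro x hx
      have h1 : 0 < msF B x := by rw [← heq x]; exact msF_pos A hMA hx
      obtain ⟨p, hpB, hxp⟩ := msF_exists_mem B h1
      rw [← hl] at hpB
      obtain ⟨i, hi⟩ := List.mem_iff_get.mp hpB
      exact ⟨i, Finset.mem_univ i, hi ▸ hxp⟩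
    refine no_cover_small Finset.univ M hMbot (fun i => l.get i) ?_ ?_ hcov
    · rw [Finset.card_univ, Fintype.card_fin]
      rw [← hl] at hBcard
      simpa using hBcard
    · intro i _ hle
      have hmem : l.get i ∈ B := by rw [← hl]; exact List.get_mem l i
      have := hmax _ hmem
      have heq' : M = l.get i :=
        Submodule.eq_of_le_of_finrank_le hle (hmax _ hmem)
      exact hMB (heq' ▸ hmem)

/-- Solutions of the isometry equation of size at most `q` are trivial. -/
lemma small_solution_trivial (N : ℕ) : ∀ A B : Multiset (Submodule K W),
    Multiset.card A ≤ N → Multiset.card A ≤ Fintype.card K →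
    Multiset.card B ≤ Fintype.card K → (∀ w, msF A w = msF B w) → A = B := by
  induction N with
  | zero =>
    intro A B hN _ _ heq
    have hA : A = 0 := Multiset.card_eq_zero.mp (Nat.le_zero.mp hN)
    subst hA
    by_contra hB0
    obtain ⟨p, hp⟩ := Multiset.exists_mem_of_ne_zero (fun h => hB0 h.symm)
    have := msF_pos B hp p.zero_mem
    rw [← heq 0] at this
    simp [msF] at this
  | succ N ih =>
    intro A B hN hAq hBq heq
    rcases eq_or_ne A 0 with rfl | hA0
    · by_contra hB0
      obtain ⟨p, hp⟩ := Multiset.exists_mem_of_ne_zero (fun h => hB0 h.symm)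
      have := msF_pos B hp p.zero_mem
      rw [← heq 0] at this
      simp [msF] at this
    · -- pick max element of A + B
      have hABne : (A + B).toFinset.Nonempty := by
        obtain ⟨p, hp⟩ := Multiset.exists_mem_of_ne_zero hA0
        exact ⟨p, Multiset.mem_toFinset.mpr (Multiset.mem_add.mpr (Or.inl hp))⟩
      obtain ⟨M, hMmem, hMmax⟩ := Finset.exists_max_image (A + B).toFinset
        (fun p => Module.finrank K ↥p) hABne
      rw [Multiset.mem_toFinset, Multiset.mem_add] at hMmem
      have hmaxA : ∀ p ∈ A, Module.finrank K ↥p ≤ Module.finrank K ↥M := fun p hp =>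
        hMmax p (Multiset.mem_toFinset.mpr (Multiset.mem_add.mpr (Or.inl hp)))
      have hmaxB : ∀ p ∈ B, Module.finrank K ↥p ≤ Module.finrank K ↥M := fun p hp =>
        hMmax p (Multiset.mem_toFinset.mpr (Multiset.mem_add.mpr (Or.inr hp)))
      have hMA : M ∈ A ∧ M ∈ B := by
        rcases hMmem with hA | hB
        · exact ⟨hA, max_mem_other A B hBq heq M hA hmaxB⟩
        · exact ⟨max_mem_other B A hAq (fun w => (heq w).symm) M hB hmaxA, hB⟩
      have heq' : ∀ w, msF (A.erase M) w = msF (B.erase M) w := by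
        intro w
        have hA' : msF A w = termF w M + msF (A.erase M) w := by
          conv_lhs => rw [← Multiset.cons_erase hMA.1]
          rw [msF_cons]
        have hB' : msF B w = termF w M + msF (B.erase M) w := by
          conv_lhs => rw [← Multiset.cons_erase hMA.2]
          rw [msF_cons]
        have := heq w
        rw [hA', hB'] at this
        linarith
      have hAe : Multiset.card (A.erase M) ≤ N := by
        rw [Multiset.card_erase_of_mem hMA.1, Nat.pred_eq_sub_one]
        omega
      have h1 : Multiset.card (A.erase M) ≤ Fintype.card K := by
        rw [Multiset.card_erase_of_mem hMA.1]; exact le_trans (Nat.pred_le _) hAq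
      have h2 : Multiset.card (B.erase M) ≤ Fintype.card K := by
        rw [Multiset.card_erase_of_mem hMA.2]; exact le_trans (Nat.pred_le _) hBq
      have hres := ih (A.erase M) (B.erase M) hAe h1 h2 heq'
      calc A = M ::ₘ A.erase M := (Multiset.cons_erase hMA.1).symm
        _ = M ::ₘ B.erase M := by rw [hres]
        _ = B := Multiset.cons_erase hMA.2

end Helpers

/-- In a nontrivial minimal solution with equal maximal dimensions `n > 1`, for every `j`
with `dim (U j) = n` there is a subspace `S ⊂ U j` of dimension `n - 2` contained in every
`V i`. -/
theorem nontrivial_solution_common_subspace_of_maxdim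
    (K W : Type*) [Field K] [Fintype K] [AddCommGroup W] [Module K W]
    [FiniteDimensional K W]
    (U V : Fin (Fintype.card K + 1) → Submodule K W)
    (hsol : IsometrySolution U V) (hnontriv : ¬ TuplesEquiv U V)
    (n : ℕ) (hn : 1 < n)
    (hmaxV : (Finset.univ.sup fun i => Module.finrank K ↥(V i)) = n)
    (hmaxU : (Finset.univ.sup fun i => Module.finrank K ↥(U i)) = n) :
    ∀ j, Module.finrank K ↥(U j) = n →
      ∃ S : Submodule K W, S < U j ∧ Module.finrank K ↥S = n - 2 ∧ ∀ i, S ≤ V i := by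
  intro j hj
  have : Finite W := Module.finite_of_finite K
  set A : Multiset (Submodule K W) := Finset.univ.val.map V with hA
  set B : Multiset (Submodule K W) := Finset.univ.val.map U with hB
  have hmsFA : ∀ w, msF A w = ∑ i, termF w (V i) := by
    intro w
    rw [hA, msF, Multiset.map_map]
    rfl
  have hmsFB : ∀ w, msF B w = ∑ i, termF w (U i) := by
    intro w
    rw [hB, msF, Multiset.map_map]
    rfl
  have heqAB : ∀ w, msF A w = msF B w := by
    intro w
    rw [hmsFA, hmsFB]
    simpa [termF] using hsol w
  have hAB : A ≠ B := by
    intro h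
    obtain ⟨σ, hσ⟩ := perm_of_map_univ_eq V U h
    exact hnontriv ⟨σ, hσ⟩
  have hUjB : U j ∈ B := Multiset.mem_map.mpr ⟨j, by simp, rfl⟩
  have hcardA : Multiset.card A = Fintype.card K + 1 := by simp [hA]
  have hcardB : Multiset.card B = Fintype.card K + 1 := by simp [hB]
  have hrankV : ∀ i, Module.finrank K ↥(V i) ≤ n := fun i =>
    hmaxV ▸ Finset.le_sup (f := fun i => Module.finrank K ↥(V i)) (Finset.mem_univ i)
  have hnotle : ∀ i, ¬ U j ≤ V i := by
    intro i hle
    have h1 : Module.finrank K ↥(V i) = n :=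
      le_antisymm (hrankV i) (hj ▸ Submodule.finrank_mono hle)
    have h2 : U j = V i := Submodule.eq_of_le_of_finrank_le hle (by rw [h1, hj])
    have hUjA : U j ∈ A := Multiset.mem_map.mpr ⟨i, by simp, h2.symm⟩
    have heq' : ∀ w, msF (A.erase (U j)) w = msF (B.erase (U j)) w := by
      intro w
      have hA' : msF A w = termF w (U j) + msF (A.erase (U j)) w := by
        conv_lhs => rw [← Multiset.cons_erase hUjA]
        rw [msF_cons]
      have hB' : msF B w = termF w (U j) + msF (B.erase (U j)) w := by
        conv_lhs => rw [← Multiset.cons_erase hUjB]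
        rw [msF_cons]
      have := heqAB w
      rw [hA', hB'] at this
      linarith
    have he1 : Multiset.card (A.erase (U j)) ≤ Fintype.card K := by
      rw [Multiset.card_erase_of_mem hUjA, hcardA, Nat.pred_eq_sub_one]; omega
    have he2 : Multiset.card (B.erase (U j)) ≤ Fintype.card K := by
      rw [Multiset.card_erase_of_mem hUjB, hcardB, Nat.pred_eq_sub_one]; omega
    have hres := small_solution_trivial (Fintype.card K) _ _ he1 he1 he2 heq'
    refine hAB ?_
    calc A = U j ::ₘ A.erase (U j) := (Multiset.cons_erase hUjA).symm
      _ = U j ::ₘ B.erase (U j) := by rw [hres]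
      _ = B := Multiset.cons_erase hUjB
  have hcov : ∀ x ∈ U j, ∃ i, x ∈ U j ⊓ V i := by
    intro x hx
    have hpos : 0 < msF A x := by
      rw [heqAB x]
      exact msF_pos B hUjB hx
    obtain ⟨p, hpA, hxp⟩ := msF_exists_mem A hpos
    rw [hA] at hpA
    obtain ⟨i, _, rfl⟩ := Multiset.mem_map.mp hpA
    exact ⟨i, Submodule.mem_inf.mpr ⟨hx, hxp⟩⟩
  have hne' : ∀ i, U j ⊓ V i ≠ U j := by
    intro i h
    exact hnotle i (by rw [← h]; exact inf_le_right)
  obtain ⟨S, hSrank, hSle⟩ := cover_structure (U j) n hn hj (fun i => U j ⊓ V i)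
    (fun _ => inf_le_left) hne' hcov
  refine ⟨S, ?_, hSrank, fun i => le_trans (hSle i) inf_le_right⟩
  have hSUj : S ≤ U j := le_trans (hSle j) inf_le_left
  refine lt_of_le_of_ne hSUj ?_
  intro hSeq
  rw [hSeq, hj] at hSrank
  omega
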